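/- Let 0 < p_1 < p_2 < ... < p_n and let r = 2k be an even integer with 1 ≤ r ≤ n. Then the inertia of the Loewner matrix L_r is (k, n-r, k), i.e., L_r has exactly k positive eigenvalues, n-r zero eigenvalues, and k negative eigenvalues (counted with multiplicity). -/

import Mathlib

open Matrix

/-- The Loewner matrix `L_r` associated with points `p 0, ..., p (n-1)` and exponent `r`:
its `(i,j)` entry is `(p i ^ r - p j ^ r) / (p i - p j)` for `i ≠ j` and `r * p i ^ (r-1)`
for `i = j` (powers are real powers `Real.rpow`). -/
noncomputable def loewner {n : ℕ} (p : Fin n → ℝ) (r : ℝ) : Matrix (Fin n) (Fin n) ℝ :=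
  Matrix.of fun i j => if i = j then r * p i ^ (r - 1) else (p i ^ r - p j ^ r) / (p i - p j)

namespace LoewnerAux

open Finset

/-- 0-1 matrix whose column `a` is the indicator of `f a`. -/
def colMat {α β : Type*} [DecidableEq β] (f : α → β) : Matrix β α ℝ :=
  Matrix.of fun b a => if b = f a then 1 else 0

lemma mul_colMat {α β γ : Type*} [Fintype β] [DecidableEq β] (B : Matrix γ β ℝ) (f : α → β) :
    B * colMat f = B.submatrix id f := by
  ext i a
  simp [colMat, Matrix.mul_apply, mul_ite]

lemma colMatT_mul_colMat {α β γ : Type*} [Fintype β] [DecidableEq β] (f : α → β) (g : γ → β) :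
    (colMat f)ᵀ * colMat g = Matrix.of fun a c => if f a = g c then 1 else 0 := by
  ext a c
  simp only [colMat, Matrix.transpose_apply, Matrix.of_apply, Matrix.mul_apply, ite_mul, one_mul,
    zero_mul, Finset.sum_ite_eq', Finset.mem_univ, if_true]

/-- The flip (anti-identity) matrix. -/
def flip (r : ℕ) : Matrix (Fin r) (Fin r) ℝ :=
  Matrix.of fun m l => if l = Fin.rev m then 1 else 0

lemma flip_mul {r : ℕ} {γ : Type*} (B : Matrix (Fin r) γ ℝ) :
    flip r * B = B.submatrix Fin.rev id := by
  ext m j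
  simp [flip, Matrix.mul_apply, ite_mul, Finset.sum_ite_eq']

lemma flip_mul_colMat {r : ℕ} {α : Type*} (f : α → Fin r) :
    flip r * colMat f = colMat (fun a => Fin.rev (f a)) := by
  rw [flip_mul]
  ext m a
  simp only [Matrix.submatrix_apply, id_eq, colMat, Matrix.of_apply]
  exact if_congr Fin.rev_eq_iff rfl rfl

/-- If `A = U D Uᵀ` with `D = diagonal e` and the quadratic form of `A` is positive
definite on the range of `M : Matrix (Fin n) (Fin k) ℝ` (in the sense below), then
`k` is at most the number of positive entries of `e`. -/
lemma le_card_pos {n k : ℕ} (A U : Matrix (Fin n) (Fin n) ℝ) (e : Fin n → ℝ)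
    (hAU : A = U * Matrix.diagonal e * Uᵀ) (M : Matrix (Fin n) (Fin k) ℝ)
    (hq : ∀ c : Fin k → ℝ, c ≠ 0 → 0 < c ⬝ᵥ (Mᵀ * A * M) *ᵥ c) :
    k ≤ Fintype.card {i // 0 < e i} := by
  classical
  obtain ⟨N, hN⟩ : ∃ N : Matrix (Fin n) (Fin k) ℝ, N = Uᵀ * M := ⟨_, rfl⟩
  have hform : ∀ c : Fin k → ℝ,
      c ⬝ᵥ (Mᵀ * A * M) *ᵥ c = ∑ i, e i * ((N *ᵥ c) i) ^ 2 := by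
    intro c
    have h1 : Mᵀ * A * M = Nᵀ * Matrix.diagonal e * N := by
      rw [hAU, hN]
      simp only [Matrix.transpose_mul, Matrix.transpose_transpose, Matrix.mul_assoc]
    rw [h1, Matrix.mul_assoc, ← Matrix.mulVec_mulVec, Matrix.dotProduct_mulVec,
      Matrix.vecMul_transpose, ← Matrix.mulVec_mulVec]
    simp only [dotProduct, Matrix.mulVec_diagonal]
    exact Finset.sum_congr rfl fun i _ => by ring
  set B : Matrix {i // 0 < e i} (Fin k) ℝ := N.submatrix Subtype.val id with hB
  have hinj : Function.Injective B.mulVecLin := by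
    rw [← LinearMap.ker_eq_bot, LinearMap.ker_eq_bot']
    intro c hc
    by_contra hc0
    have hq' := hq c hc0
    rw [hform c] at hq'
    have hle : ∑ i, e i * ((N *ᵥ c) i) ^ 2 ≤ 0 := by
      apply Finset.sum_nonpos
      intro i _
      by_cases hi : 0 < e i
      · have hyi : (N *ᵥ c) i = 0 := by
          have h := congrFun hc ⟨i, hi⟩
          simpa [Matrix.mulVecLin_apply, hB, Matrix.mulVec, Matrix.submatrix_apply,
            dotProduct] using h
        simp [hyi]
      · push_neg at hi
        nlinarith [sq_nonneg ((N *ᵥ c) i)]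
    linarith
  have hfin := LinearMap.finrank_le_finrank_of_injective hinj
  simpa [Module.finrank_pi] using hfin

end LoewnerAux

/-- If `r = 2k` is an even integer with `1 ≤ r ≤ n`, then the inertia of `L_r`
is `(k, n - r, k)`. -/
theorem loewner_inertia_even {n k r : ℕ} (p : Fin n → ℝ)
    (hp : ∀ i, 0 < p i) (hmono : StrictMono p)
    (hr : r = 2 * k) (hr1 : 1 ≤ r) (hrn : r ≤ n)
    (hA : (loewner p (r : ℝ)).IsHermitian) :
    Fintype.card {i // 0 < hA.eigenvalues i} = k ∧
    Fintype.card {i // hA.eigenvalues i = 0} = n - r ∧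
    Fintype.card {i // hA.eigenvalues i < 0} = k := by
  classical
  have hkr : k ≤ r := by omega
  set A := loewner p (r : ℝ) with hAdef
  set V : Matrix (Fin n) (Fin r) ℝ := Matrix.of (fun i m => p i ^ (m : ℕ)) with hV
  set cLE : Fin r → Fin n := Fin.castLE hrn with hcLE
  set cK : Fin k → Fin r := Fin.castLE hkr with hcK
  -- the factorization A = V * flip * Vᵀ
  have hfact : A = V * (LoewnerAux.flip r * Vᵀ) := by
    ext i j
    have hsum : (V * (LoewnerAux.flip r * Vᵀ)) i j
        = ∑ m : Fin r, p i ^ (m : ℕ) * p j ^ (r - 1 - (m : ℕ)) := by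
      rw [LoewnerAux.flip_mul]
      simp only [Matrix.mul_apply, Matrix.submatrix_apply, Matrix.transpose_apply, id_eq, hV,
        Matrix.of_apply]
      refine Finset.sum_congr rfl fun m _ => ?_
      congr 2
      simp [Fin.val_rev]
      omega
    rw [hsum, hAdef]
    simp only [loewner, Matrix.of_apply]
    by_cases hij : i = j
    · subst hij
      rw [if_pos rfl]
      have hexp : (r : ℝ) - 1 = ((r - 1 : ℕ) : ℝ) := by
        rw [Nat.cast_sub hr1, Nat.cast_one]
      rw [hexp, Real.rpow_natCast]
      have hterm : ∀ m : Fin r, p i ^ (m : ℕ) * p i ^ (r - 1 - (m : ℕ)) = p i ^ (r - 1) := by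
        intro m
        rw [← pow_add]
        congr 1
        have := m.isLt
        omega
      rw [Finset.sum_congr rfl fun m _ => hterm m]
      simp [mul_comm]
    · rw [if_neg hij]
      have hpij : p i ≠ p j := fun h => hij (hmono.injective h)
      have hne : p i - p j ≠ 0 := sub_ne_zero.mpr hpij
      rw [Real.rpow_natCast, Real.rpow_natCast, div_eq_iff hne]
      rw [Fin.sum_univ_eq_sum_range (fun m => p i ^ m * p j ^ (r - 1 - m))]
      exact (geom_sum₂_mul (p i) (p j) r).symm
  -- Vandermonde matrix
  set V' : Matrix (Fin r) (Fin r) ℝ := Matrix.vandermonde (fun i => p (cLE i)) with hV'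
  have hdet : V'.det ≠ 0 := by
    rw [hV', Matrix.det_vandermonde]
    apply ne_of_gt
    apply Finset.prod_pos
    intro i _
    apply Finset.prod_pos
    intro j hj
    have hij : i < j := Finset.mem_Ioi.mp hj
    exact sub_pos.mpr (hmono hij)
  have hdetT : (V'ᵀ).det ≠ 0 := by rw [Matrix.det_transpose]; exact hdet
  have hVE : Vᵀ * LoewnerAux.colMat cLE = V'ᵀ := by
    rw [LoewnerAux.mul_colMat]
    ext m i
    simp [hV, hV', Matrix.vandermonde]
  -- construction of definite subspaces
  have hC12 : ∀ s t : Fin k, cK s ≠ Fin.rev (cK t) := by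
    intro s t h
    have hs := s.isLt
    have ht := t.isLt
    rw [Fin.ext_iff] at h
    simp only [hcK, Fin.val_rev, Fin.coe_castLE] at h
    omega
  have ecK : ∀ s t : Fin k, cK s = cK t ↔ s = t := fun s t =>
    (Fin.castLE_injective hkr).eq_iff
  have e11 : (LoewnerAux.colMat cK)ᵀ * LoewnerAux.colMat cK = 1 := by
    rw [LoewnerAux.colMatT_mul_colMat]
    ext s t
    rw [Matrix.of_apply, Matrix.one_apply]
    exact if_congr (ecK s t) rfl rfl
  have e22 : (LoewnerAux.colMat (fun s => Fin.rev (cK s)))ᵀ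
      * LoewnerAux.colMat (fun s => Fin.rev (cK s)) = 1 := by
    rw [LoewnerAux.colMatT_mul_colMat]
    ext s t
    rw [Matrix.of_apply, Matrix.one_apply]
    exact if_congr (Fin.rev_inj.trans (ecK s t)) rfl rfl
  have e12 : (LoewnerAux.colMat cK)ᵀ * LoewnerAux.colMat (fun s => Fin.rev (cK s)) = 0 := by
    rw [LoewnerAux.colMatT_mul_colMat]
    ext s t
    simp only [Matrix.of_apply, Matrix.zero_apply]
    rw [if_neg (hC12 s t)]
  have e21 : (LoewnerAux.colMat (fun s => Fin.rev (cK s)))ᵀ * LoewnerAux.colMat cK = 0 := by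
    rw [LoewnerAux.colMatT_mul_colMat]
    ext s t
    simp only [Matrix.of_apply, Matrix.zero_apply]
    rw [if_neg]
    intro h
    exact hC12 t s h.symm
  have hM : ∀ ε : ℝ, ε * ε = 1 → ∃ M : Matrix (Fin n) (Fin k) ℝ,
      Mᵀ * A * M = (2 * ε) • (1 : Matrix (Fin k) (Fin k) ℝ) := by
    intro ε hε
    set W : Matrix (Fin r) (Fin k) ℝ :=
      LoewnerAux.colMat cK + ε • LoewnerAux.colMat (fun s => Fin.rev (cK s)) with hW
    refine ⟨LoewnerAux.colMat cLE * ((V'ᵀ)⁻¹ * W), ?_⟩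
    set M : Matrix (Fin n) (Fin k) ℝ := LoewnerAux.colMat cLE * ((V'ᵀ)⁻¹ * W) with hMdef
    have hVM : Vᵀ * M = W := by
      rw [hMdef, ← Matrix.mul_assoc, hVE, ← Matrix.mul_assoc,
        Matrix.mul_nonsing_inv _ (isUnit_iff_ne_zero.mpr hdetT), Matrix.one_mul]
    have h1 : Mᵀ * A * M = (Vᵀ * M)ᵀ * (LoewnerAux.flip r * (Vᵀ * M)) := by
      rw [hfact]
      simp only [Matrix.transpose_mul, Matrix.transpose_transpose, Matrix.mul_assoc]
    rw [h1, hVM]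
    have hflipW : LoewnerAux.flip r * W
        = LoewnerAux.colMat (fun s => Fin.rev (cK s)) + ε • LoewnerAux.colMat cK := by
      simp only [hW, Matrix.mul_add, Matrix.mul_smul, LoewnerAux.flip_mul_colMat,
        Fin.rev_rev]
    rw [hflipW, hW]
    rw [Matrix.transpose_add, Matrix.transpose_smul, Matrix.add_mul, Matrix.mul_add,
      Matrix.mul_add, Matrix.smul_mul, Matrix.smul_mul, Matrix.mul_smul, Matrix.mul_smul,
      e11, e12, e21, e22]
    rw [smul_smul, hε]
    ext s t
    simp only [Matrix.add_apply, Matrix.smul_apply, Matrix.one_apply, Matrix.zero_apply,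
      smul_eq_mul, mul_ite, mul_one, mul_zero]
    split_ifs <;> ring
  -- spectral decomposition over ℝ
  set U : Matrix (Fin n) (Fin n) ℝ := (hA.eigenvectorUnitary : Matrix (Fin n) (Fin n) ℝ) with hU
  have hspec : A = U * Matrix.diagonal hA.eigenvalues * Uᵀ := by
    have h := hA.spectral_theorem
    rw [Unitary.conjStarAlgAut_apply, Matrix.star_eq_conjTranspose, Matrix.conjTranspose_eq_transpose_of_trivial] at h
    have hd : (RCLike.ofReal ∘ hA.eigenvalues : Fin n → ℝ) = hA.eigenvalues := by
      funext i
      simp [Function.comp, RCLike.ofReal_real_eq_id]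
    rw [hd] at h
    exact h
  have hdotpos : ∀ c : Fin k → ℝ, c ≠ 0 → 0 < c ⬝ᵥ c := by
    intro c hc
    have hnn : 0 ≤ c ⬝ᵥ c := Finset.sum_nonneg fun i _ => mul_self_nonneg _
    refine lt_of_le_of_ne hnn fun h => hc ?_
    exact dotProduct_self_eq_zero.mp h.symm
  have hpos : k ≤ Fintype.card {i // 0 < hA.eigenvalues i} := by
    obtain ⟨M, hMq⟩ := hM 1 (by norm_num)
    apply LoewnerAux.le_card_pos A U hA.eigenvalues hspec M
    intro c hc
    rw [hMq]
    simp only [Matrix.smul_mulVec, Matrix.one_mulVec, dotProduct_smul,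
      smul_eq_mul, mul_one]
    have := hdotpos c hc
    nlinarith
  have hneg : k ≤ Fintype.card {i // hA.eigenvalues i < 0} := by
    obtain ⟨M, hMq⟩ := hM (-1) (by norm_num)
    have hA' : -A = U * Matrix.diagonal (fun i => -hA.eigenvalues i) * Uᵀ := by
      have hdneg : Matrix.diagonal (fun i => -hA.eigenvalues i)
          = -Matrix.diagonal hA.eigenvalues := by
        rw [← Matrix.diagonal_neg]
      rw [hdneg, Matrix.mul_neg, Matrix.neg_mul]
      exact congrArg Neg.neg hspec
    have hcard : Fintype.card {i // 0 < -hA.eigenvalues i}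
        = Fintype.card {i // hA.eigenvalues i < 0} :=
      Fintype.card_congr (Equiv.subtypeEquivRight fun i => by simp [neg_pos])
    rw [← hcard]
    apply LoewnerAux.le_card_pos (-A) U (fun i => -hA.eigenvalues i) hA' M
    intro c hc
    have hMq' : Mᵀ * (-A) * M = (2 : ℝ) • (1 : Matrix (Fin k) (Fin k) ℝ) := by
      rw [Matrix.mul_neg, Matrix.neg_mul, hMq]
      rw [← neg_smul]
      norm_num
    rw [hMq']
    simp only [Matrix.smul_mulVec, Matrix.one_mulVec, dotProduct_smul,
      smul_eq_mul]
    have := hdotpos c hc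
    nlinarith
  -- rank bound
  have hrank : A.rank ≤ r := by
    calc A.rank = (V * (LoewnerAux.flip r * Vᵀ)).rank := by rw [← hfact]
      _ ≤ (LoewnerAux.flip r * Vᵀ).rank := Matrix.rank_mul_le_right _ _
      _ ≤ Fintype.card (Fin r) := Matrix.rank_le_card_height _
      _ = r := Fintype.card_fin r
  have hrankeq := hA.rank_eq_card_non_zero_eigs
  have hcard_ne : Fintype.card {i // hA.eigenvalues i ≠ 0}
      = Fintype.card {i // 0 < hA.eigenvalues i} + Fintype.card {i // hA.eigenvalues i < 0} := by
    simp only [Fintype.card_subtype]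
    rw [← Finset.card_union_of_disjoint]
    · congr 1
      ext i
      simp only [Finset.mem_filter, Finset.mem_union, Finset.mem_univ, true_and]
      constructor
      · intro h
        exact (h.lt_or_gt).symm
      · rintro (h | h)
        · exact h.ne'
        · exact h.ne
    · rw [Finset.disjoint_left]
      intro i h1 h2
      simp only [Finset.mem_filter, Finset.mem_univ, true_and] at h1 h2
      linarith
  have hz : Fintype.card {i // hA.eigenvalues i = 0}
      + Fintype.card {i // hA.eigenvalues i ≠ 0} = n := by
    simp only [Fintype.card_subtype]
    rw [Finset.card_filter_add_card_filter_not]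
    simp
  refine ⟨by omega, by omega, by omega⟩
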